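/- arXiv:2411.17975 — 7 statements merged into one kernel-verified Lean document; each statement's English description precedes it below -/
import Mathlib

section
/- The set ↺I^2_7 consists of exactly the seven triples (1,3,5), (1,3,6), (1,4,6), (2,4,6), (2,4,7), (2,5,7), (3,5,7), and there are exactly 51 ordered pairs (𝔛, 𝔜) of subsets of ↺I^2_7 satisfying 𝔛 = nc 𝔜 and 𝔜 = nc 𝔛 (equivalently, there are exactly 51 subsets 𝔛 ⊆ ↺I^2_7 with nc(nc 𝔛) = 𝔛). These pairs correspond to the weak cotorsion pairs in the 4-angulated cluster category of type A_2. -/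
/-- Membership in the index set `↺I^r_m`: an `(r+1)`-tuple `(i_0, …, i_r)` of integers with
`1 ≤ i_0`, `i_r ≤ m`, `i_{x+1} ≥ i_x + 2` for all `0 ≤ x ≤ r-1`, and `i_r + 2 ≤ i_0 + m`. -/
def InCyc (m r : ℕ) (x : Fin (r + 1) → ℤ) : Prop :=
  1 ≤ x 0 ∧ x (Fin.last r) ≤ (m : ℤ) ∧
    (∀ i : Fin r, x i.castSucc + 2 ≤ x i.succ) ∧
    x (Fin.last r) + 2 ≤ x 0 + (m : ℤ)

/-- `X` intertwines `Y`, written `X ≀ Y`: `x_0 < y_0 < x_1 < y_1 < ⋯ < x_r < y_r`. -/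
def Intertwines (r : ℕ) (x y : Fin (r + 1) → ℤ) : Prop :=
  (∀ i, x i < y i) ∧ ∀ i : Fin r, y i.castSucc < x i.succ

/-- `nc 𝔛 = { U ∈ ↺I^r_m : for every V ∈ 𝔛 neither U ≀ V nor V ≀ U }`. -/
def nc (m r : ℕ) (𝔛 : Set (Fin (r + 1) → ℤ)) : Set (Fin (r + 1) → ℤ) :=
  {u | InCyc m r u ∧ ∀ v ∈ 𝔛, ¬ Intertwines r u v ∧ ¬ Intertwines r v u}


instance (r : ℕ) (x y : Fin (r+1) → ℤ) : Decidable (Intertwines r x y) := by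
  unfold Intertwines; infer_instance
instance (m r : ℕ) (x : Fin (r+1) → ℤ) : Decidable (InCyc m r x) := by
  unfold InCyc; infer_instance

def tri : Fin 7 → (Fin 3 → ℤ) :=
  ![![1,3,5], ![1,3,6], ![1,4,6], ![2,4,6], ![2,4,7], ![2,5,7], ![3,5,7]]

def compat : Fin 7 → Fin 7 → Bool :=
  ![![true, true, true, false, false, true, true],
    ![true, true, true, true, false, false, true],
    ![true, true, true, true, true, false, false],
    ![false, true, true, true, true, true, false],
    ![false, false, true, true, true, true, true],
    ![true, false, false, true, true, true, true],
    ![true, true, false, false, true, true, true]]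

lemma compat_iff : ∀ i j, compat i j = true ↔
    (¬ Intertwines 2 (tri i) (tri j) ∧ ¬ Intertwines 2 (tri j) (tri i)) := by decide

lemma triInj : Function.Injective tri := by decide

lemma hS : {x | InCyc 7 2 x} =
    ({![1,3,5], ![1,3,6], ![1,4,6], ![2,4,6], ![2,4,7], ![2,5,7], ![3,5,7]} :
      Set (Fin 3 → ℤ)) := by
  ext x
  constructor
  · rintro ⟨h1, h2, h3, h4⟩
    have e0 : x 0 + 2 ≤ x 1 := h3 0
    have e1 : x 1 + 2 ≤ x 2 := h3 1
    have hx : x = ![x 0, x 1, x 2] := by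
      funext i; fin_cases i <;> rfl
    have h2' : x 2 ≤ 7 := h2
    have h4' : x 2 + 2 ≤ x 0 + 7 := h4
    have key : (x 0 = 1 ∧ x 1 = 3 ∧ x 2 = 5) ∨ (x 0 = 1 ∧ x 1 = 3 ∧ x 2 = 6) ∨
        (x 0 = 1 ∧ x 1 = 4 ∧ x 2 = 6) ∨ (x 0 = 2 ∧ x 1 = 4 ∧ x 2 = 6) ∨
        (x 0 = 2 ∧ x 1 = 4 ∧ x 2 = 7) ∨ (x 0 = 2 ∧ x 1 = 5 ∧ x 2 = 7) ∨
        (x 0 = 3 ∧ x 1 = 5 ∧ x 2 = 7) := by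
      omega
    rw [hx]
    rcases key with ⟨a,b,c⟩|⟨a,b,c⟩|⟨a,b,c⟩|⟨a,b,c⟩|⟨a,b,c⟩|⟨a,b,c⟩|⟨a,b,c⟩ <;>
      rw [a, b, c] <;> simp
  · intro hx
    simp only [Set.mem_insert_iff, Set.mem_singleton_iff] at hx
    rcases hx with rfl|rfl|rfl|rfl|rfl|rfl|rfl <;> decide

lemma hmem (u : Fin 3 → ℤ) : InCyc 7 2 u ↔ ∃ i, tri i = u := by
  constructor
  · intro hu
    have := hS ▸ (show u ∈ {x | InCyc 7 2 x} from hu)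
    simp only [Set.mem_insert_iff, Set.mem_singleton_iff] at this
    rcases this with rfl|rfl|rfl|rfl|rfl|rfl|rfl
    exacts [⟨0, rfl⟩, ⟨1, rfl⟩, ⟨2, rfl⟩, ⟨3, rfl⟩, ⟨4, rfl⟩, ⟨5, rfl⟩, ⟨6, rfl⟩]
  · rintro ⟨i, rfl⟩
    revert i; decide

def ncF (A : Finset (Fin 7)) : Finset (Fin 7) :=
  Finset.univ.filter (fun i => ∀ j ∈ A, compat i j = true)

def Φ (A : Finset (Fin 7)) : Set (Fin 3 → ℤ) := tri '' ↑A

lemma ΦInj : Function.Injective Φ := fun A B h =>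
  Finset.coe_injective ((Set.image_injective.mpr triInj) h)

lemma Φ_sub (A : Finset (Fin 7)) : Φ A ⊆ {x | InCyc 7 2 x} := by
  rintro u ⟨i, _, rfl⟩
  exact (hmem _).mpr ⟨i, rfl⟩

lemma nc_eq (A : Finset (Fin 7)) : nc 7 2 (Φ A) = Φ (ncF A) := by
  ext u
  constructor
  · rintro ⟨hu, h⟩
    obtain ⟨i, rfl⟩ := (hmem _).mp hu
    refine ⟨i, ?_, rfl⟩
    simp only [ncF, Finset.coe_filter, Finset.mem_univ, true_and, Set.mem_setOf_eq]
    intro j hj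
    exact (compat_iff i j).mpr (h (tri j) ⟨j, hj, rfl⟩)
  · rintro ⟨i, hi, rfl⟩
    simp only [ncF, Finset.coe_filter, Finset.mem_univ, true_and, Set.mem_setOf_eq] at hi
    refine ⟨(hmem _).mpr ⟨i, rfl⟩, ?_⟩
    rintro v ⟨j, hj, rfl⟩
    exact (compat_iff i j).mp (hi j hj)

lemma exists_fin (𝔛 : Set (Fin 3 → ℤ)) (h : 𝔛 ⊆ {x | InCyc 7 2 x}) : ∃ A, 𝔛 = Φ A := by
  classical
  refine ⟨(Set.toFinite {i | tri i ∈ 𝔛}).toFinset, ?_⟩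
  ext u
  constructor
  · intro hu
    obtain ⟨i, rfl⟩ := (hmem _).mp (h hu)
    exact ⟨i, by simpa using hu, rfl⟩
  · rintro ⟨i, hi, rfl⟩
    simpa using hi

lemma count3 : (Finset.univ.filter (fun A : Finset (Fin 7) => ncF (ncF A) = A)).card = 51 := by
  decide

lemma nc_sub (𝔛 : Set (Fin 3 → ℤ)) : nc 7 2 𝔛 ⊆ {x | InCyc 7 2 x} := fun _ h => h.1

lemma T3_eq : {𝔛 : Set (Fin 3 → ℤ) | 𝔛 ⊆ {x | InCyc 7 2 x} ∧ nc 7 2 (nc 7 2 𝔛) = 𝔛} =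
    Φ '' {A : Finset (Fin 7) | ncF (ncF A) = A} := by
  ext 𝔛
  constructor
  · rintro ⟨hsub, hfix⟩
    obtain ⟨A, rfl⟩ := exists_fin 𝔛 hsub
    refine ⟨A, ?_, rfl⟩
    apply ΦInj
    rw [← nc_eq, ← nc_eq, hfix]
  · rintro ⟨A, hA, rfl⟩
    exact ⟨Φ_sub A, by rw [nc_eq, nc_eq, hA]⟩

lemma part3 : Set.ncard {𝔛 : Set (Fin 3 → ℤ) |
    𝔛 ⊆ {x | InCyc 7 2 x} ∧ nc 7 2 (nc 7 2 𝔛) = 𝔛} = 51 := by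
  classical
  rw [T3_eq, Set.ncard_image_of_injective _ ΦInj]
  have : {A : Finset (Fin 7) | ncF (ncF A) = A} =
      ↑(Finset.univ.filter (fun A : Finset (Fin 7) => ncF (ncF A) = A)) := by
    ext A; simp
  rw [this, Set.ncard_coe_finset, count3]

lemma part2 : Set.ncard {p : Set (Fin 3 → ℤ) × Set (Fin 3 → ℤ) |
    p.1 ⊆ {x | InCyc 7 2 x} ∧ p.2 ⊆ {x | InCyc 7 2 x} ∧
    p.1 = nc 7 2 p.2 ∧ p.2 = nc 7 2 p.1} = 51 := by
  have heq : {p : Set (Fin 3 → ℤ) × Set (Fin 3 → ℤ) |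
      p.1 ⊆ {x | InCyc 7 2 x} ∧ p.2 ⊆ {x | InCyc 7 2 x} ∧
      p.1 = nc 7 2 p.2 ∧ p.2 = nc 7 2 p.1} =
      (fun 𝔛 => (nc 7 2 𝔛, 𝔛)) '' {𝔛 : Set (Fin 3 → ℤ) |
        𝔛 ⊆ {x | InCyc 7 2 x} ∧ nc 7 2 (nc 7 2 𝔛) = 𝔛} := by
    ext ⟨p1, p2⟩
    constructor
    · rintro ⟨h1, h2, h3, h4⟩
      exact ⟨p2, ⟨h2, by rw [← h3, ← h4]⟩, by simp [← h3]⟩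
    · rintro ⟨𝔛, ⟨hsub, hfix⟩, h⟩
      obtain ⟨rfl, rfl⟩ := Prod.mk.injEq .. ▸ h
      exact ⟨nc_sub _, hsub, rfl, hfix.symm⟩
  have hinj : Function.Injective (fun 𝔛 : Set (Fin 3 → ℤ) => (nc 7 2 𝔛, 𝔛)) := by
    intro a b h
    exact congrArg Prod.snd h
  rw [heq, Set.ncard_image_of_injective _ hinj, part3]

/-- The set `↺I^2_7` consists of exactly the seven listed triples, and there are exactly 51
ordered pairs `(𝔛, 𝔜)` of subsets of `↺I^2_7` with `𝔛 = nc 𝔜` and `𝔜 = nc 𝔛`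
(equivalently, exactly 51 subsets `𝔛 ⊆ ↺I^2_7` with `nc (nc 𝔛) = 𝔛`); these correspond to
the weak cotorsion pairs in the 4-angulated cluster category of type `A_2`. -/
theorem weak_cotorsion_pairs_A2_d2 :
    {x | InCyc 7 2 x} =
      ({![1,3,5], ![1,3,6], ![1,4,6], ![2,4,6], ![2,4,7], ![2,5,7], ![3,5,7]} :
        Set (Fin 3 → ℤ)) ∧
    Set.ncard {p : Set (Fin 3 → ℤ) × Set (Fin 3 → ℤ) |
        p.1 ⊆ {x | InCyc 7 2 x} ∧ p.2 ⊆ {x | InCyc 7 2 x} ∧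
        p.1 = nc 7 2 p.2 ∧ p.2 = nc 7 2 p.1} = 51 ∧
    Set.ncard {𝔛 : Set (Fin 3 → ℤ) |
        𝔛 ⊆ {x | InCyc 7 2 x} ∧ nc 7 2 (nc 7 2 𝔛) = 𝔛} = 51 := by
  exact ⟨hS, part2, part3⟩
end

section
/- There are exactly 7 subsets 𝔛 of ↺I^2_7 satisfying nc 𝔛 = 𝔛, namely {(1,3,5),(1,3,6),(1,4,6)}, {(1,3,6),(1,4,6),(2,4,6)}, {(1,4,6),(2,4,6),(2,4,7)}, {(2,4,6),(2,4,7),(2,5,7)}, {(2,4,7),(2,5,7),(3,5,7)}, {(2,5,7),(3,5,7),(1,3,5)} and {(3,5,7),(1,3,5),(1,3,6)}. These correspond to the cluster tilting subcategories of the 4-angulated cluster category of type A_2, i.e., to the weak cotorsion pairs of the form (𝒳, 𝒳). -/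
instance inst_s5 (m r : ℕ) (x : Fin (r+1) → ℤ) : Decidable (InCyc m r x) :=
  inferInstanceAs (Decidable (_ ∧ _ ∧ _ ∧ _))

instance inst_s5_2 (r : ℕ) (x y : Fin (r+1) → ℤ) : Decidable (Intertwines r x y) :=
  inferInstanceAs (Decidable (_ ∧ _))

private def e : Fin 7 → (Fin 3 → ℤ) :=
  ![![1,3,5], ![1,3,6], ![1,4,6], ![2,4,6], ![2,4,7], ![2,5,7], ![3,5,7]]

private def C (j i : Fin 7) : Prop :=
  ¬ Intertwines 2 (e j) (e i) ∧ ¬ Intertwines 2 (e i) (e j)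

private instance (j i : Fin 7) : Decidable (C j i) := inferInstanceAs (Decidable (_ ∧ _))

private def v (k : Fin 7) : Fin 7 → Bool := fun i => decide (i = k ∨ i = k + 1 ∨ i = k + 2)

set_option maxRecDepth 10000 in
private theorem classify : ∀ b : Fin 7 → Bool,
    (∀ j, b j = true ↔ ∀ i, b i = true → C j i) → ∃ k, b = v k := by decide

private lemma e_inj : Function.Injective e := fun a b h => by
  revert h; revert a b; decide

private lemma e_inCyc : ∀ j, InCyc 7 2 (e j) := by decide

private lemma inCyc_iff (u : Fin 3 → ℤ) : InCyc 7 2 u ↔ ∃ j, u = e j := by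
  constructor
  · rintro ⟨h1, h2, h3, h4⟩
    have e1 : u 0 + 2 ≤ u 1 := h3 0
    have e2 : u 1 + 2 ≤ u 2 := h3 1
    have e3 : u 2 ≤ 7 := h2
    have e4 : u 2 + 2 ≤ u 0 + 7 := h4
    obtain ⟨a, b, c, rfl⟩ : ∃ a b c, u = ![a, b, c] :=
      ⟨u 0, u 1, u 2, by funext i; fin_cases i <;> rfl⟩
    simp only [Matrix.cons_val_zero, Matrix.cons_val_one, Matrix.head_cons,
      Matrix.cons_val_two, Matrix.tail_cons] at h1 e1 e2 e3 e4
    obtain ⟨ha1, ha2⟩ : 1 ≤ a ∧ a ≤ 3 := by omega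
    obtain ⟨hb1, hb2⟩ : a + 2 ≤ b ∧ b ≤ 5 := by omega
    obtain ⟨hc1, hc2, hc3⟩ : b + 2 ≤ c ∧ c ≤ 7 ∧ c ≤ a + 5 := by omega
    interval_cases a <;> interval_cases b <;> interval_cases c <;> decide
  · rintro ⟨j, rfl⟩; exact e_inCyc j

private def X (b : Fin 7 → Bool) : Set (Fin 3 → ℤ) := {x | ∃ i, b i = true ∧ x = e i}

private lemma mem_X (b : Fin 7 → Bool) (j : Fin 7) : e j ∈ X b ↔ b j = true := by
  constructor
  · rintro ⟨i, hi, hx⟩; rwa [e_inj hx]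
  · intro hj; exact ⟨j, hj, rfl⟩

private lemma nc_X (b : Fin 7 → Bool)
    (hb : ∀ j, b j = true ↔ ∀ i, b i = true → C j i) : nc 7 2 (X b) = X b := by
  ext u
  constructor
  · rintro ⟨hI, hc⟩
    obtain ⟨j, rfl⟩ := (inCyc_iff u).mp hI
    exact ⟨j, (hb j).mpr (fun i hi => hc (e i) ⟨i, hi, rfl⟩), rfl⟩
  · rintro ⟨j, hj, rfl⟩
    refine ⟨e_inCyc j, ?_⟩
    rintro w ⟨i, hi, rfl⟩
    exact (hb j).mp hj i hi

private lemma hv : ∀ k j, v k j = true ↔ ∀ i, v k i = true → C j i := by decide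

private lemma v_inj : ∀ a b : Fin 7, v a = v b → a = b := by decide

private lemma range_char :
    {𝔛 : Set (Fin 3 → ℤ) | nc 7 2 𝔛 = 𝔛} = Set.range (fun k : Fin 7 => X (v k)) := by
  ext 𝔛
  simp only [Set.mem_setOf_eq, Set.mem_range]
  constructor
  · intro h
    classical
    set b : Fin 7 → Bool := fun j => decide (e j ∈ 𝔛) with hb_def
    have hbspec : ∀ j, b j = true ↔ e j ∈ 𝔛 := fun j => decide_eq_true_iff
    have hXb : 𝔛 = X b := by
      ext x
      constructor
      · intro hx
        have hx' : x ∈ nc 7 2 𝔛 := by rw [h]; exact hx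
        obtain ⟨j, rfl⟩ := (inCyc_iff x).mp hx'.1
        exact ⟨j, (hbspec j).mpr hx, rfl⟩
      · rintro ⟨i, hi, rfl⟩; exact (hbspec i).mp hi
    have hb : ∀ j, b j = true ↔ ∀ i, b i = true → C j i := by
      intro j
      rw [hbspec j]
      constructor
      · intro hj i hi
        have hj' : e j ∈ nc 7 2 𝔛 := by rw [h]; exact hj
        exact hj'.2 (e i) ((hbspec i).mp hi)
      · intro H
        have : e j ∈ nc 7 2 𝔛 := by
          refine ⟨e_inCyc j, ?_⟩
          intro w hw
          obtain ⟨i, hi, rfl⟩ := hXb ▸ hw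
          exact H i hi
        rw [← h]; exact this
    obtain ⟨k, hk⟩ := classify b hb
    exact ⟨k, (hXb.trans (by rw [hk])).symm⟩
  · rintro ⟨k, rfl⟩
    exact nc_X (v k) (hv k)

private lemma X_v (k : Fin 7) : X (v k) = {e k, e (k + 1), e (k + 2)} := by
  ext x
  simp only [X, v, Set.mem_setOf_eq, Set.mem_insert_iff, Set.mem_singleton_iff,
    decide_eq_true_eq]
  constructor
  · rintro ⟨i, (rfl | rfl | rfl), rfl⟩
    · left; rfl
    · right; left; rfl
    · right; right; rfl
  · rintro (rfl | rfl | rfl)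
    · exact ⟨k, Or.inl rfl, rfl⟩
    · exact ⟨k + 1, Or.inr (Or.inl rfl), rfl⟩
    · exact ⟨k + 2, Or.inr (Or.inr rfl), rfl⟩


/-- There are exactly 7 subsets `𝔛` of `↺I^2_7` with `nc 𝔛 = 𝔛`, namely the seven listed
ones; they correspond to the cluster tilting subcategories of the 4-angulated cluster category
of type `A_2`, i.e. to the weak cotorsion pairs of the form `(𝒳, 𝒳)`. -/
theorem nc_fixed_points_A2_d2 :
    {𝔛 : Set (Fin 3 → ℤ) | nc 7 2 𝔛 = 𝔛} =
      ({ {![1,3,5], ![1,3,6], ![1,4,6]},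
         {![1,3,6], ![1,4,6], ![2,4,6]},
         {![1,4,6], ![2,4,6], ![2,4,7]},
         {![2,4,6], ![2,4,7], ![2,5,7]},
         {![2,4,7], ![2,5,7], ![3,5,7]},
         {![2,5,7], ![3,5,7], ![1,3,5]},
         {![3,5,7], ![1,3,5], ![1,3,6]} } : Set (Set (Fin 3 → ℤ))) ∧
    Set.ncard {𝔛 : Set (Fin 3 → ℤ) | nc 7 2 𝔛 = 𝔛} = 7 := by
  have hXv : ∀ k : Fin 7, X (v k) = {e k, e (k + 1), e (k + 2)} := X_v
  constructor
  · rw [range_char]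
    ext 𝔛
    simp only [Set.mem_range, Set.mem_insert_iff, Set.mem_singleton_iff]
    constructor
    · rintro ⟨k, rfl⟩
      fin_cases k <;> rw [X_v] <;> simp [e] <;> tauto
    · rintro (rfl | rfl | rfl | rfl | rfl | rfl | rfl)
      · exact ⟨0, by rw [X_v]; rfl⟩
      · exact ⟨1, by rw [X_v]; rfl⟩
      · exact ⟨2, by rw [X_v]; rfl⟩
      · exact ⟨3, by rw [X_v]; rfl⟩
      · exact ⟨4, by rw [X_v]; rfl⟩
      · exact ⟨5, by rw [X_v]; rfl⟩
      · exact ⟨6, by rw [X_v]; rfl⟩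
  · rw [range_char, ← Set.image_univ,
      Set.ncard_image_of_injective _ (fun a b hab => ?_), Set.ncard_univ]
    · simp
    · apply v_inj
      funext j
      have : (e j ∈ X (v a)) = (e j ∈ X (v b)) := by rw [hab]
      simp only [mem_X] at this
      cases hva : v a j <;> cases hvb : v b j <;> simp_all
end

section
/- In ↺I^3_9, the subset M = {(1,3,5,7), (1,4,6,8), (2,4,7,9)} satisfies nc M = M; in particular no two elements of M intertwine, and each of the remaining six elements of ↺I^3_9 intertwines (in one order or the other) some element of M. (M corresponds to the maximal 3-rigid object 1357 ⊕ 1468 ⊕ 2479 of the 5-angulated cluster category O_{A_2^3}, which is not cluster tilting; thus (add M, add M) is a weak cotorsion pair but not a cotorsion pair.) -/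
lemma inter_iff (x y : Fin 4 → ℤ) : Intertwines 3 x y ↔
    (x 0 < y 0 ∧ x 1 < y 1 ∧ x 2 < y 2 ∧ x 3 < y 3) ∧
    (y 0 < x 1 ∧ y 1 < x 2 ∧ y 2 < x 3) := by
  constructor
  · rintro ⟨h1, h2⟩
    exact ⟨⟨h1 0, h1 1, h1 2, h1 3⟩, h2 0, h2 1, h2 2⟩
  · rintro ⟨⟨a0, a1, a2, a3⟩, b0, b1, b2⟩
    refine ⟨fun i => ?_, fun i => ?_⟩
    · fin_cases i <;> assumption
    · fin_cases i <;> assumption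

lemma incyc_iff (x : Fin 4 → ℤ) : InCyc 9 3 x ↔
    1 ≤ x 0 ∧ x 3 ≤ 9 ∧ (x 0 + 2 ≤ x 1 ∧ x 1 + 2 ≤ x 2 ∧ x 2 + 2 ≤ x 3) ∧ x 3 + 2 ≤ x 0 + 9 := by
  constructor
  · rintro ⟨h1, h2, h3, h4⟩
    exact ⟨h1, h2, ⟨h3 0, h3 1, h3 2⟩, h4⟩
  · rintro ⟨h1, h2, ⟨a, b, c⟩, h4⟩
    refine ⟨h1, h2, fun i => ?_, h4⟩
    fin_cases i <;> assumption

lemma eq_vec_iff (x : Fin 4 → ℤ) (a b c d : ℤ) :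
    x = ![a,b,c,d] ↔ x 0 = a ∧ x 1 = b ∧ x 2 = c ∧ x 3 = d := by
  constructor
  · rintro rfl; simp
  · rintro ⟨h0, h1, h2, h3⟩
    funext i; fin_cases i <;> simpa

lemma interR (x : Fin 4 → ℤ) (a b c d : ℤ) : Intertwines 3 x ![a,b,c,d] ↔
    (x 0 < a ∧ x 1 < b ∧ x 2 < c ∧ x 3 < d) ∧ (a < x 1 ∧ b < x 2 ∧ c < x 3) := by
  rw [inter_iff]; norm_num; exact Iff.rfl

lemma interL (x : Fin 4 → ℤ) (a b c d : ℤ) : Intertwines 3 ![a,b,c,d] x ↔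
    (a < x 0 ∧ b < x 1 ∧ c < x 2 ∧ d < x 3) ∧ (x 0 < b ∧ x 1 < c ∧ x 2 < d) := by
  rw [inter_iff]; norm_num; exact Iff.rfl

lemma part3_s7 : ∀ u : Fin 4 → ℤ, InCyc 9 3 u →
      u ∉ ({![1,3,5,7], ![1,4,6,8], ![2,4,7,9]} : Set (Fin 4 → ℤ)) →
      ∃ v ∈ ({![1,3,5,7], ![1,4,6,8], ![2,4,7,9]} : Set (Fin 4 → ℤ)),
        Intertwines 3 u v ∨ Intertwines 3 v u := by
  intro u h hnot
  rw [incyc_iff] at h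
  simp only [Set.mem_insert_iff, Set.mem_singleton_iff, not_or, eq_vec_iff] at hnot
  obtain ⟨h1, h2, h3⟩ := hnot
  have e0 : u 0 = 1 ∨ u 0 = 2 ∨ u 0 = 3 := by omega
  have e1 : u 1 = 3 ∨ u 1 = 4 ∨ u 1 = 5 := by omega
  have e2 : u 2 = 5 ∨ u 2 = 6 ∨ u 2 = 7 := by omega
  have e3 : u 3 = 7 ∨ u 3 = 8 ∨ u 3 = 9 := by omega
  rcases e0 with e0|e0|e0 <;> rcases e1 with e1|e1|e1 <;>
    rcases e2 with e2|e2|e2 <;> rcases e3 with e3|e3|e3 <;>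
  first
    | omega
    | exact ⟨![1,3,5,7], by simp, Or.inl ((interR u 1 3 5 7).mpr (by omega))⟩
    | exact ⟨![1,3,5,7], by simp, Or.inr ((interL u 1 3 5 7).mpr (by omega))⟩
    | exact ⟨![1,4,6,8], by simp, Or.inl ((interR u 1 4 6 8).mpr (by omega))⟩
    | exact ⟨![1,4,6,8], by simp, Or.inr ((interL u 1 4 6 8).mpr (by omega))⟩
    | exact ⟨![2,4,7,9], by simp, Or.inl ((interR u 2 4 7 9).mpr (by omega))⟩
    | exact ⟨![2,4,7,9], by simp, Or.inr ((interL u 2 4 7 9).mpr (by omega))⟩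

lemma part2_s7 : ∀ u ∈ ({![1,3,5,7], ![1,4,6,8], ![2,4,7,9]} : Set (Fin 4 → ℤ)),
      ∀ v ∈ ({![1,3,5,7], ![1,4,6,8], ![2,4,7,9]} : Set (Fin 4 → ℤ)),
        ¬ Intertwines 3 u v := by
  intro u hu v hv
  simp only [Set.mem_insert_iff, Set.mem_singleton_iff] at hu hv
  rcases hu with rfl | rfl | rfl <;> rcases hv with rfl | rfl | rfl <;>
    simp [interR]

/-- In `↺I^3_9` the subset `M = {1357, 1468, 2479}` satisfies `nc M = M`: no two of its
elements intertwine, and each of the remaining six elements of `↺I^3_9` intertwines (in one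
order or the other) some element of `M`.  `M` corresponds to the maximal 3-rigid object
`1357 ⊕ 1468 ⊕ 2479` of the 5-angulated cluster category `O_{A_2^3}`, which is not cluster
tilting; thus `(add M, add M)` is a weak cotorsion pair but not a cotorsion pair. -/
theorem maximal_rigid_M_A2_d3 :
    nc 9 3 ({![1,3,5,7], ![1,4,6,8], ![2,4,7,9]} : Set (Fin 4 → ℤ)) =
      ({![1,3,5,7], ![1,4,6,8], ![2,4,7,9]} : Set (Fin 4 → ℤ)) ∧
    (∀ u ∈ ({![1,3,5,7], ![1,4,6,8], ![2,4,7,9]} : Set (Fin 4 → ℤ)),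
      ∀ v ∈ ({![1,3,5,7], ![1,4,6,8], ![2,4,7,9]} : Set (Fin 4 → ℤ)),
        ¬ Intertwines 3 u v) ∧
    (∀ u : Fin 4 → ℤ, InCyc 9 3 u →
      u ∉ ({![1,3,5,7], ![1,4,6,8], ![2,4,7,9]} : Set (Fin 4 → ℤ)) →
      ∃ v ∈ ({![1,3,5,7], ![1,4,6,8], ![2,4,7,9]} : Set (Fin 4 → ℤ)),
        Intertwines 3 u v ∨ Intertwines 3 v u) := by
  refine ⟨?_, part2_s7, part3_s7⟩
  ext u
  constructor
  · rintro ⟨hc, hni⟩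
    by_contra hnot
    obtain ⟨v, hv, hiv⟩ := part3_s7 u hc hnot
    rcases hiv with h | h
    · exact (hni v hv).1 h
    · exact (hni v hv).2 h
  · intro hu
    refine ⟨?_, fun v hv => ?_⟩
    · simp only [Set.mem_insert_iff, Set.mem_singleton_iff] at hu
      rcases hu with rfl | rfl | rfl <;> (rw [incyc_iff]; norm_num; decide)
    · exact ⟨part2_s7 u hu v hv, part2_s7 v hv u hu⟩
end

section
/- Let 𝒟 be a strongly functorially finite rigid subcategory of a pretriangulated category C satisfying ^⊥(Σ𝒟) = (Σ⁻¹𝒟)^⊥, and denote this common class by 𝒵. Then (𝒵, 𝒵) is a 𝒟-mutation pair: (a) for every Z ∈ 𝒵 there exists a distinguished triangle Z →f D →g A → ΣZ with D ∈ 𝒟, A ∈ 𝒵, f a left 𝒟-approximation of Z and g a right 𝒟-approximation of A; (b) for every Z ∈ 𝒵 there exists a distinguished triangle B →f′ D′ →g′ Z → ΣB with B ∈ 𝒵, D′ ∈ 𝒟, f′ a left 𝒟-approximation of B and g′ a right 𝒟-approximation of Z. -/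
open CategoryTheory Limits Pretriangulated

universe v u

variable {C : Type u} [Category.{v} C] [HasZeroObject C] [HasShift C ℤ] [Preadditive C]
  [∀ n : ℤ, (shiftFunctor C n).Additive] [Pretriangulated C] [HasBinaryBiproducts C]

/-- A (full) subcategory, identified with its class of objects: closed under isomorphisms,
finite direct sums and direct summands. -/
def IsSubcat (S : Set C) : Prop :=
  (∀ ⦃X Y : C⦄, (X ≅ Y) → X ∈ S → Y ∈ S) ∧
  (∀ ⦃X Y : C⦄, X ∈ S → Y ∈ S → (X ⊞ Y) ∈ S) ∧
  (∀ ⦃X Y : C⦄, (X ⊞ Y) ∈ S → X ∈ S ∧ Y ∈ S)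

/-- `g : X ⟶ Z` is a right `S`-approximation of `Z`. -/
def IsRightApprox (S : Set C) {X Z : C} (g : X ⟶ Z) : Prop :=
  X ∈ S ∧ ∀ ⦃X' : C⦄, X' ∈ S → ∀ u : X' ⟶ Z, ∃ t : X' ⟶ X, t ≫ g = u

/-- `f : Z ⟶ X` is a left `S`-approximation of `Z`. -/
def IsLeftApprox (S : Set C) {Z X : C} (f : Z ⟶ X) : Prop :=
  X ∈ S ∧ ∀ ⦃X' : C⦄, X' ∈ S → ∀ u : Z ⟶ X', ∃ t : X ⟶ X', f ≫ t = u

/-- `S` is contravariantly finite: every object admits a right `S`-approximation. -/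
def ContravariantlyFinite (S : Set C) : Prop :=
  ∀ Z : C, ∃ (X : C) (g : X ⟶ Z), IsRightApprox S g

/-- `S` is covariantly finite: every object admits a left `S`-approximation. -/
def CovariantlyFinite (S : Set C) : Prop :=
  ∀ Z : C, ∃ (X : C) (f : Z ⟶ X), IsLeftApprox S f

/-- `(𝒳, 𝒴)` is a cotorsion pair: `Hom(𝒳, Σ𝒴) = 0` and every object `Z` admits distinguished
triangles `Σ⁻¹X → Z → Y → X` and `Y′ → X′ → Z → ΣY′` with `X, X′ ∈ 𝒳` and `Y, Y′ ∈ 𝒴`. -/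
def IsCotorsionPair (𝒳 𝒴 : Set C) : Prop :=
  (∀ ⦃A B : C⦄, A ∈ 𝒳 → B ∈ 𝒴 → ∀ f : A ⟶ B⟦(1 : ℤ)⟧, f = 0) ∧
  (∀ Z : C, ∃ (A B : C) (f : A⟦(-1 : ℤ)⟧ ⟶ Z) (g : Z ⟶ B) (h : B ⟶ A⟦(-1 : ℤ)⟧⟦(1 : ℤ)⟧),
      A ∈ 𝒳 ∧ B ∈ 𝒴 ∧ Triangle.mk f g h ∈ distTriang C) ∧
  (∀ Z : C, ∃ (A B : C) (f : B ⟶ A) (g : A ⟶ Z) (h : Z ⟶ B⟦(1 : ℤ)⟧),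
      A ∈ 𝒳 ∧ B ∈ 𝒴 ∧ Triangle.mk f g h ∈ distTriang C)
/-- `𝒟` is rigid: `Hom(𝒟, Σ𝒟) = 0`. -/
def IsRigid (𝒟 : Set C) : Prop :=
  ∀ ⦃D D' : C⦄, D ∈ 𝒟 → D' ∈ 𝒟 → ∀ f : D ⟶ D'⟦(1 : ℤ)⟧, f = 0

/-- `𝒟` is strongly functorially finite: every object `Z` admits distinguished triangles
`Z →f D → A → ΣZ` with `D ∈ 𝒟` and `f` a left `𝒟`-approximation, and
`B → D′ →g Z → ΣB` with `D′ ∈ 𝒟` and `g` a right `𝒟`-approximation. -/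
def StronglyFunctoriallyFinite (𝒟 : Set C) : Prop :=
  (∀ Z : C, ∃ (D A : C) (f : Z ⟶ D) (g : D ⟶ A) (h : A ⟶ Z⟦(1 : ℤ)⟧),
      D ∈ 𝒟 ∧ (Triangle.mk f g h ∈ distTriang C) ∧ IsLeftApprox 𝒟 f) ∧
  (∀ Z : C, ∃ (B D : C) (f : B ⟶ D) (g : D ⟶ Z) (h : Z ⟶ B⟦(1 : ℤ)⟧),
      D ∈ 𝒟 ∧ (Triangle.mk f g h ∈ distTriang C) ∧ IsRightApprox 𝒟 g)

/-- The left perpendicular class `^⊥(Σ𝒟)`. -/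
def leftPerpShift (𝒟 : Set C) : Set C :=
  {Z : C | ∀ D ∈ 𝒟, ∀ f : Z ⟶ D⟦(1 : ℤ)⟧, f = 0}

/-- The right perpendicular class `(Σ⁻¹𝒟)^⊥`. -/
def rightPerpShift (𝒟 : Set C) : Set C :=
  {Z : C | ∀ D ∈ 𝒟, ∀ f : D⟦(-1 : ℤ)⟧ ⟶ Z, f = 0}


omit [HasZeroObject C] [Pretriangulated C] in
lemma hom_shift_zero_of' {X Y : C} (hz : ∀ f : X⟦(-1:ℤ)⟧ ⟶ Y, f = 0)
    (v : X ⟶ Y⟦(1:ℤ)⟧) : v = 0 := by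
  set adj := (shiftEquiv' C (-1:ℤ) (1:ℤ) (by ring)).toAdjunction
  have h0 : (adj.homEquiv X Y).symm v = 0 := hz _
  have h2 : v = adj.homEquiv X Y 0 := by
    rw [← h0]; exact ((adj.homEquiv X Y).apply_symm_apply v).symm
  rw [h2]; simp [Adjunction.homEquiv_apply]; rfl

omit [HasZeroObject C] [Pretriangulated C] in
lemma hom_unshift_zero_of' {X Y : C} (hz : ∀ f : X ⟶ Y⟦(1:ℤ)⟧, f = 0)
    (v : X⟦(-1:ℤ)⟧ ⟶ Y) : v = 0 := by
  set adj := (shiftEquiv' C (-1:ℤ) (1:ℤ) (by ring)).toAdjunction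
  have h0 : adj.homEquiv X Y v = 0 := hz _
  have h2 : v = (adj.homEquiv X Y).symm 0 := by
    rw [← h0]; exact ((adj.homEquiv X Y).symm_apply_apply v).symm
  rw [h2]; simp [Adjunction.homEquiv_symm_apply]; rfl

/-- Lemma 4.8 for `d = 1`: if `𝒟` is a strongly functorially finite rigid subcategory with
`^⊥(Σ𝒟) = (Σ⁻¹𝒟)^⊥ =: 𝒵`, then `(𝒵, 𝒵)` is a `𝒟`-mutation pair. -/
theorem mutation_pair_of_rigid (𝒟 : Set C) (hsub : IsSubcat 𝒟) (hrig : IsRigid 𝒟)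
    (hff : StronglyFunctoriallyFinite 𝒟)
    (hperp : leftPerpShift 𝒟 = rightPerpShift 𝒟) :
    (∀ Z ∈ leftPerpShift 𝒟,
      ∃ (D A : C) (f : Z ⟶ D) (g : D ⟶ A) (h : A ⟶ Z⟦(1 : ℤ)⟧),
        D ∈ 𝒟 ∧ A ∈ leftPerpShift 𝒟 ∧ (Triangle.mk f g h ∈ distTriang C) ∧
          IsLeftApprox 𝒟 f ∧ IsRightApprox 𝒟 g) ∧
    (∀ Z ∈ leftPerpShift 𝒟,
      ∃ (B D : C) (f : B ⟶ D) (g : D ⟶ Z) (h : Z ⟶ B⟦(1 : ℤ)⟧),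
        B ∈ leftPerpShift 𝒟 ∧ D ∈ 𝒟 ∧ (Triangle.mk f g h ∈ distTriang C) ∧
          IsLeftApprox 𝒟 f ∧ IsRightApprox 𝒟 g) := by
  constructor
  · -- part (a)
    intro Z hZ
    have hZr : Z ∈ rightPerpShift 𝒟 := hperp ▸ hZ
    obtain ⟨D, A, f, g, h, hD, hTr, hfapp⟩ := hff.1 Z
    refine ⟨D, A, f, g, h, hD, ?_, hTr, hfapp, hD, ?_⟩
    · -- A ∈ leftPerpShift
      intro D₁ hD₁ u
      have hgu : g ≫ u = 0 := hrig hD hD₁ (g ≫ u)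
      obtain ⟨v, hv⟩ := Triangle.yoneda_exact₃ _ hTr u hgu
      set w := (shiftFunctor C (1:ℤ)).preimage v with hw
      have hvw : w⟦(1:ℤ)⟧' = v := (shiftFunctor C (1:ℤ)).map_preimage v
      obtain ⟨t, ht⟩ := hfapp.2 hD₁ w
      have heq : u = h ≫ (f ≫ t)⟦(1:ℤ)⟧' := by simp only [ht]; rw [← hvw] at hv; exact hv
      have hz := comp_distTriang_mor_zero₃₁ _ hTr
      change h ≫ f⟦(1:ℤ)⟧' = 0 at hz
      rw [heq, Functor.map_comp, ← Category.assoc, hz, zero_comp]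
    · -- g is a right 𝒟-approximation of A
      intro D' hD' u
      have h0 : u ≫ h = 0 := hom_shift_zero_of' (hZr D' hD') (u ≫ h)
      obtain ⟨t, ht⟩ := Triangle.coyoneda_exact₃ _ hTr u h0
      exact ⟨t, ht.symm⟩
  · -- part (b)
    intro Z hZ
    have hZr : Z ∈ rightPerpShift 𝒟 := hperp ▸ hZ
    obtain ⟨B, D', f, g, h, hD', hTr, hgapp⟩ := hff.2 Z
    have hB : B ∈ rightPerpShift 𝒟 := by
      intro D₀ hD₀ v
      refine hom_unshift_zero_of' (fun u => ?_) v
      have hu : u ≫ f⟦(1:ℤ)⟧' = 0 := hrig hD₀ hD' (u ≫ f⟦(1:ℤ)⟧')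
      obtain ⟨t, ht⟩ := Triangle.coyoneda_exact₁ _ hTr u hu
      obtain ⟨s, hs⟩ := hgapp.2 hD₀ t
      have hz := comp_distTriang_mor_zero₂₃ _ hTr
      change g ≫ h = 0 at hz
      change u = t ≫ h at ht
      rw [ht, ← hs]
      change (s ≫ g) ≫ h = 0
      rw [Category.assoc]
      rw [hz, comp_zero]
    refine ⟨B, D', f, g, h, hperp.symm ▸ hB, hD', hTr, ⟨hD', ?_⟩, hgapp⟩
    -- f is a left 𝒟-approximation of B
    intro D₁ hD₁ u
    have hz1 : ∀ w : Z⟦(-1:ℤ)⟧ ⟶ D₁, w = 0 :=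
      fun w => hom_unshift_zero_of' (hZ D₁ hD₁) w
    obtain ⟨t, ht⟩ := Triangle.yoneda_exact₂ _ (inv_rot_of_distTriang _ hTr) u (hz1 _)
    exact ⟨t, ht.symm⟩
end

section
/- Let 𝒟 be a rigid subcategory of a pretriangulated category C (Hom(𝒟, Σ𝒟) = 0), let X be an object with Hom_C(X, ΣD) = 0 for all D ∈ 𝒟, and let Y →f D →g T →h ΣY be a distinguished triangle with D ∈ 𝒟 such that g is a right 𝒟-approximation of T. Then the map Hom_C(X, T) → Hom_C(X, ΣY) given by φ ↦ h ∘ φ is surjective, and its kernel is exactly the subgroup [𝒟](X, T) of morphisms X → T that factor through some object of 𝒟. Consequently Hom_C(X, T)/[𝒟](X, T) ≅ Hom_C(X, ΣY) as abelian groups. -/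
open CategoryTheory Limits Pretriangulated

universe v u

variable {C : Type u} [Category.{v} C] [HasZeroObject C] [HasShift C ℤ] [Preadditive C]
  [∀ n : ℤ, (shiftFunctor C n).Additive] [Pretriangulated C] [HasBinaryBiproducts C]

/-- Lemma 4.9(2) for `d = 1`: let `𝒟` be a rigid subcategory, `X` an object with
`Hom(X, Σ𝒟) = 0`, and `Y →f D →g T →h ΣY` a distinguished triangle with `D ∈ 𝒟` and `g`
a right `𝒟`-approximation of `T`.  Then `φ ↦ φ ≫ h : Hom(X, T) → Hom(X, ΣY)` is surjective
with kernel exactly `[𝒟](X, T)`, the morphisms factoring through an object of `𝒟`;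
consequently `Hom(X, T)/[𝒟](X, T) ≅ Hom(X, ΣY)`. -/
theorem hom_quotient_iso_hom_shift (𝒟 : Set C) (hsub : IsSubcat 𝒟) (hrig : IsRigid 𝒟)
    (X : C) (hX : ∀ D ∈ 𝒟, ∀ f : X ⟶ D⟦(1 : ℤ)⟧, f = 0)
    (Y D T : C) (f : Y ⟶ D) (g : D ⟶ T) (h : T ⟶ Y⟦(1 : ℤ)⟧)
    (hD : D ∈ 𝒟) (htri : Triangle.mk f g h ∈ distTriang C)
    (hg : IsRightApprox 𝒟 g) :
    Function.Surjective (fun φ : X ⟶ T => φ ≫ h) ∧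
      ∀ φ : X ⟶ T, φ ≫ h = 0 ↔
        ∃ (D' : C), D' ∈ 𝒟 ∧ ∃ (a : X ⟶ D') (b : D' ⟶ T), a ≫ b = φ := by
  constructor
  · intro ψ
    obtain ⟨φ, hφ⟩ := Triangle.coyoneda_exact₁ _ htri ψ (hX D hD _)
    exact ⟨φ, hφ.symm⟩
  · intro φ
    constructor
    · intro h0
      obtain ⟨a, ha⟩ := Triangle.coyoneda_exact₃ _ htri φ h0
      exact ⟨D, hD, a, g, ha.symm⟩
    · rintro ⟨D', hD', a, b, rfl⟩
      obtain ⟨t, ht⟩ := hg.2 hD' b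
      have hz : g ≫ h = 0 := comp_distTriang_mor_zero₂₃ _ htri
      rw [Category.assoc, ← ht, Category.assoc, hz, comp_zero, comp_zero]
end

section
/- Let C be a pretriangulated category, 𝒟 a subcategory with ^⊥(Σ𝒟) = (Σ⁻¹𝒟)^⊥, and set 𝒵 = ^⊥(Σ𝒟). Let (𝒳, 𝒴) be a cotorsion pair in C with core ℐ = 𝒳 ∩ 𝒴. Then 𝒟 ⊆ ℐ if and only if 𝒟 ⊆ 𝒳 ⊆ 𝒵 and 𝒟 ⊆ 𝒴 ⊆ 𝒵. -/
open CategoryTheory Limits Pretriangulated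

universe v u

variable {C : Type u} [Category.{v} C] [HasZeroObject C] [HasShift C ℤ] [Preadditive C]
  [∀ n : ℤ, (shiftFunctor C n).Additive] [Pretriangulated C] [HasBinaryBiproducts C]

/-- Lemma 4.10 for `d = 1`: let `𝒟` be a subcategory with `^⊥(Σ𝒟) = (Σ⁻¹𝒟)^⊥ =: 𝒵`,
and `(𝒳, 𝒴)` a cotorsion pair with core `ℐ = 𝒳 ∩ 𝒴`.  Then `𝒟 ⊆ ℐ` if and only if
`𝒟 ⊆ 𝒳 ⊆ 𝒵` and `𝒟 ⊆ 𝒴 ⊆ 𝒵`. -/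
theorem core_contains_iff (𝒟 𝒳 𝒴 : Set C)
    (h𝒟 : IsSubcat 𝒟) (h𝒳 : IsSubcat 𝒳) (h𝒴 : IsSubcat 𝒴)
    (hperp : leftPerpShift 𝒟 = rightPerpShift 𝒟)
    (hct : IsCotorsionPair 𝒳 𝒴) :
    𝒟 ⊆ 𝒳 ∩ 𝒴 ↔
      (𝒟 ⊆ 𝒳 ∧ 𝒳 ⊆ leftPerpShift 𝒟) ∧ (𝒟 ⊆ 𝒴 ∧ 𝒴 ⊆ leftPerpShift 𝒟) := by
  constructor
  · intro h
    have hDX : 𝒟 ⊆ 𝒳 := fun D hD => (h hD).1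
    have hDY : 𝒟 ⊆ 𝒴 := fun D hD => (h hD).2
    refine ⟨⟨hDX, ?_⟩, ⟨hDY, ?_⟩⟩
    · intro X hX D hD f
      exact hct.1 hX (hDY hD) f
    · intro Y hY
      rw [hperp]
      intro D hD f
      have h0 : (shiftFunctorCompIsoId C (-1 : ℤ) (1 : ℤ) (by norm_num)).inv.app D ≫
          (shiftFunctor C (1 : ℤ)).map f = 0 := hct.1 (hDX hD) hY _
      have h1 : (shiftFunctor C (1 : ℤ)).map f = 0 := by
        have := congrArg (fun g =>
          (shiftFunctorCompIsoId C (-1 : ℤ) (1 : ℤ) (by norm_num)).hom.app D ≫ g) h0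
        simpa using this
      exact (shiftFunctor C (1 : ℤ)).map_injective (by simpa using h1)
  · rintro ⟨⟨hDX, _⟩, ⟨hDY, _⟩⟩ D hD
    exact ⟨hDX hD, hDY hD⟩
end

section
/- Let 𝒟 be a strongly functorially finite rigid subcategory of a pretriangulated category C satisfying ^⊥(Σ𝒟) = (Σ⁻¹𝒟)^⊥, denote this common class by 𝒵, and assume 𝒵 is extension closed. Then forward and backward 𝒟-mutation are mutually inverse operations on subcategories ℳ of C with 𝒟 ⊆ ℳ ⊆ 𝒵: for every such ℳ one has μ_𝒟(μ_𝒟⁻¹(ℳ)) = ℳ and μ_𝒟⁻¹(μ_𝒟(ℳ)) = ℳ. -/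
open CategoryTheory Limits Pretriangulated

universe v u

variable {C : Type u} [Category.{v} C] [HasZeroObject C] [HasShift C ℤ] [Preadditive C]
  [∀ n : ℤ, (shiftFunctor C n).Additive] [Pretriangulated C] [HasBinaryBiproducts C]

/-- `𝒵` is extension closed: every morphism `w : X₂ ⟶ ΣX₁` with `X₁, X₂ ∈ 𝒵` fits in a
distinguished triangle `X₁ → X → X₂ →w ΣX₁` with `X ∈ 𝒵`. -/
def ExtClosed (𝒵 : Set C) : Prop :=
  ∀ ⦃X₁ X₂ : C⦄, X₁ ∈ 𝒵 → X₂ ∈ 𝒵 → ∀ w : X₂ ⟶ X₁⟦(1 : ℤ)⟧,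
    ∃ (X : C) (f : X₁ ⟶ X) (g : X ⟶ X₂), X ∈ 𝒵 ∧ Triangle.mk f g w ∈ distTriang C

/-- The forward `𝒟`-mutation `μ_𝒟⁻¹(ℳ)`: objects of `𝒟` together with all `A` fitting in a
distinguished triangle `M →f D →g A → ΣM` with `M ∈ ℳ`, `D ∈ 𝒟`, `f` a left
`𝒟`-approximation and `g` a right `𝒟`-approximation. -/
def forwardMut (𝒟 ℳ : Set C) : Set C :=
  𝒟 ∪ {A : C | ∃ (M D : C) (f : M ⟶ D) (g : D ⟶ A) (h : A ⟶ M⟦(1 : ℤ)⟧),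
      M ∈ ℳ ∧ D ∈ 𝒟 ∧ (Triangle.mk f g h ∈ distTriang C) ∧
        IsLeftApprox 𝒟 f ∧ IsRightApprox 𝒟 g}

/-- The backward `𝒟`-mutation `μ_𝒟(ℳ)`: objects of `𝒟` together with all `B` fitting in a
distinguished triangle `B →f D →g M → ΣB` with `M ∈ ℳ`, `D ∈ 𝒟`, `f` a left
`𝒟`-approximation and `g` a right `𝒟`-approximation. -/
def backwardMut (𝒟 ℳ : Set C) : Set C :=
  𝒟 ∪ {B : C | ∃ (D M : C) (f : B ⟶ D) (g : D ⟶ M) (h : M ⟶ B⟦(1 : ℤ)⟧),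
      M ∈ ℳ ∧ D ∈ 𝒟 ∧ (Triangle.mk f g h ∈ distTriang C) ∧
        IsLeftApprox 𝒟 f ∧ IsRightApprox 𝒟 g}

section MutAux

open ZeroObject

noncomputable def isoOfSqZero {W : C} (ε : W ⟶ W) (hε : ε ≫ ε = 0) : W ≅ W where
  hom := 𝟙 W - ε
  inv := 𝟙 W + ε
  hom_inv_id := by simp [Preadditive.sub_comp, Preadditive.comp_add, hε]
  inv_hom_id := by simp [Preadditive.add_comp, Preadditive.comp_sub, hε]

noncomputable def biprodPiIso (F : WalkingPair → C) :
    (F .left ⊞ F .right) ≅ ∏ᶜ F where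
  hom := Pi.lift (fun j => WalkingPair.casesOn j biprod.fst biprod.snd)
  inv := biprod.lift (Pi.π F .left) (Pi.π F .right)
  hom_inv_id := by apply biprod.hom_ext <;> simp
  inv_hom_id := by
    apply Pi.hom_ext
    rintro (_|_) <;> simp

lemma biprodTriangle_distinguished {X₁ Y₁ Z₁ X₂ Y₂ Z₂ : C}
    (f₁ : X₁ ⟶ Y₁) (g₁ : Y₁ ⟶ Z₁) (h₁ : Z₁ ⟶ X₁⟦(1:ℤ)⟧)
    (f₂ : X₂ ⟶ Y₂) (g₂ : Y₂ ⟶ Z₂) (h₂ : Z₂ ⟶ X₂⟦(1:ℤ)⟧)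
    (hT₁ : Triangle.mk f₁ g₁ h₁ ∈ distTriang C)
    (hT₂ : Triangle.mk f₂ g₂ h₂ ∈ distTriang C) :
    Triangle.mk (biprod.map f₁ f₂) (biprod.map g₁ g₂)
      (biprod.desc (h₁ ≫ (biprod.inl : X₁ ⟶ X₁ ⊞ X₂)⟦(1:ℤ)⟧')
        (h₂ ≫ (biprod.inr : X₂ ⟶ X₁ ⊞ X₂)⟦(1:ℤ)⟧')) ∈ distTriang C := by
  let T : WalkingPair → Triangle C :=
    fun j => WalkingPair.casesOn j (Triangle.mk' X₁ Y₁ Z₁ f₁ g₁ h₁) (Triangle.mk' X₂ Y₂ Z₂ f₂ g₂ h₂)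
  have hT : ∀ j, T j ∈ distTriang C := by rintro (_|_) <;> assumption
  refine isomorphic_distinguished _ (productTriangle_distinguished T hT) _ ?_
  refine Triangle.isoMk _ _ (biprodPiIso (fun j => (T j).obj₁))
    (biprodPiIso (fun j => (T j).obj₂)) (biprodPiIso (fun j => (T j).obj₃)) ?_ ?_ ?_
  · dsimp only [Triangle.mk, productTriangle]
    apply Pi.hom_ext
    rintro (_|_) <;> simp [biprodPiIso, T]
  · dsimp only [Triangle.mk, productTriangle]
    apply Pi.hom_ext
    rintro (_|_) <;> simp [biprodPiIso, T]
  · dsimp only [Triangle.mk, productTriangle]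
    rw [← Category.assoc, IsIso.eq_comp_inv]
    rw [Category.assoc]
    apply Pi.hom_ext
    rintro (_|_) <;>
    · rw [Category.assoc, Category.assoc, piComparison_comp_π]
      apply biprod.hom_ext' <;>
        simp [biprodPiIso, T, ← Functor.map_comp]

/-- Two distinguished triangles over the same base `Z` whose second morphisms factor through
each other have the same cone up to direct summands: `X ⊞ Y' ≅ X' ⊞ Y`. -/
lemma coneA {X Y Z X' Y' : C} {f : X ⟶ Y} {g : Y ⟶ Z} {h : Z ⟶ X⟦(1:ℤ)⟧}
    {f' : X' ⟶ Y'} {g' : Y' ⟶ Z} {h' : Z ⟶ X'⟦(1:ℤ)⟧}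
    (hT : Triangle.mk f g h ∈ distTriang C) (hT' : Triangle.mk f' g' h' ∈ distTriang C)
    (c : Y' ⟶ Y) (hc : c ≫ g = g') (c' : Y ⟶ Y') (hc' : c' ≫ g' = g) :
    Nonempty ((X ⊞ Y') ≅ (X' ⊞ Y)) := by
  obtain ⟨Q, a, b, hQ⟩ := distinguished_cocone_triangle (biprod.desc g g' : Y ⊞ Y' ⟶ Z)
  have hTa : Triangle.mk (biprod.map f (𝟙 Y')) (biprod.desc g 0 : Y ⊞ Y' ⟶ Z)
      (h ≫ (biprod.inl : X ⟶ X ⊞ Y')⟦(1:ℤ)⟧') ∈ distTriang C := by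
    refine isomorphic_distinguished _
      (biprodTriangle_distinguished f g h (𝟙 Y') (0 : Y' ⟶ (0:C)) (0 : (0:C) ⟶ Y'⟦(1:ℤ)⟧)
        hT (contractible_distinguished Y')) _ ?_
    exact Triangle.isoMk _ _ (Iso.refl _) (Iso.refl _) (isoBiprodZero (isZero_zero C))
      (by dsimp only [Triangle.mk]; aesop_cat) (by dsimp only [Triangle.mk]; apply biprod.hom_ext' <;> simp [isoBiprodZero])
      (by dsimp only [Triangle.mk]; simp [isoBiprodZero])
  have hTb : Triangle.mk (biprod.map f' (𝟙 Y)) (biprod.desc g' 0 : Y' ⊞ Y ⟶ Z)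
      (h' ≫ (biprod.inl : X' ⟶ X' ⊞ Y)⟦(1:ℤ)⟧') ∈ distTriang C := by
    refine isomorphic_distinguished _
      (biprodTriangle_distinguished f' g' h' (𝟙 Y) (0 : Y ⟶ (0:C)) (0 : (0:C) ⟶ Y⟦(1:ℤ)⟧)
        hT' (contractible_distinguished Y)) _ ?_
    exact Triangle.isoMk _ _ (Iso.refl _) (Iso.refl _) (isoBiprodZero (isZero_zero C))
      (by dsimp only [Triangle.mk]; aesop_cat) (by dsimp only [Triangle.mk]; apply biprod.hom_ext' <;> simp [isoBiprodZero])
      (by dsimp only [Triangle.mk]; simp [isoBiprodZero])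
  have e₁ : (Triangle.mk (biprod.map f (𝟙 Y')) (biprod.desc g 0 : Y ⊞ Y' ⟶ Z)
      (h ≫ (biprod.inl : X ⟶ X ⊞ Y')⟦(1:ℤ)⟧')).rotate ≅ Triangle.mk (biprod.desc g g') a b := by
    refine isoTriangleOfIso₁₂ _ _ (rot_of_distTriang _ hTa) hQ
      (isoOfSqZero (W := Y ⊞ Y') (biprod.snd ≫ c ≫ biprod.inl) (by simp)) (Iso.refl Z) ?_
    dsimp only [Triangle.mk, Triangle.rotate]
    apply biprod.hom_ext' <;>
      simp [isoOfSqZero, Preadditive.sub_comp, Preadditive.comp_sub, hc]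
  have e₂ : (Triangle.mk (biprod.map f' (𝟙 Y)) (biprod.desc g' 0 : Y' ⊞ Y ⟶ Z)
      (h' ≫ (biprod.inl : X' ⟶ X' ⊞ Y)⟦(1:ℤ)⟧')).rotate ≅ Triangle.mk (biprod.desc g g') a b := by
    refine isoTriangleOfIso₁₂ _ _ (rot_of_distTriang _ hTb) hQ
      ((biprod.braiding Y' Y) ≪≫ isoOfSqZero (biprod.fst ≫ c' ≫ biprod.inr) (by simp))
      (Iso.refl Z) ?_
    dsimp only [Triangle.mk, Triangle.rotate]
    apply biprod.hom_ext' <;>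
      simp [isoOfSqZero, Preadditive.sub_comp, Preadditive.comp_sub, hc']
  have E : ((X ⊞ Y')⟦(1:ℤ)⟧ : C) ≅ (X' ⊞ Y)⟦(1:ℤ)⟧ :=
    Triangle.π₃.mapIso e₁ ≪≫ (Triangle.π₃.mapIso e₂).symm
  exact ⟨(shiftFunctor C (1:ℤ)).preimageIso E⟩

/-- Two distinguished triangles on the same object `X` whose first morphisms factor through
each other have the same cocone up to direct summands: `Z ⊞ Y'' ≅ Z'' ⊞ Y`. -/
lemma coneB {X Y Z Y'' Z'' : C} {f : X ⟶ Y} {g : Y ⟶ Z} {h : Z ⟶ X⟦(1:ℤ)⟧}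
    {f'' : X ⟶ Y''} {g'' : Y'' ⟶ Z''} {h'' : Z'' ⟶ X⟦(1:ℤ)⟧}
    (hT : Triangle.mk f g h ∈ distTriang C) (hT'' : Triangle.mk f'' g'' h'' ∈ distTriang C)
    (t : Y ⟶ Y'') (ht : f ≫ t = f'') (t' : Y'' ⟶ Y) (ht' : f'' ≫ t' = f) :
    Nonempty ((Z ⊞ Y'') ≅ (Z'' ⊞ Y)) := by
  obtain ⟨Q, a, b, hQ⟩ := distinguished_cocone_triangle (biprod.lift f f'' : X ⟶ Y ⊞ Y'')
  have hTa : Triangle.mk (biprod.lift f 0 : X ⟶ Y ⊞ Y'') (biprod.map g (𝟙 Y''))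
      (biprod.desc h 0 : Z ⊞ Y'' ⟶ X⟦(1:ℤ)⟧) ∈ distTriang C := by
    refine isomorphic_distinguished _
      (biprodTriangle_distinguished f g h (0 : (0:C) ⟶ Y'') (𝟙 Y'') (0 : Y'' ⟶ (0:C)⟦(1:ℤ)⟧)
        hT (contractible_distinguished₁ Y'')) _ ?_
    exact Triangle.isoMk _ _ (isoBiprodZero (isZero_zero C)) (Iso.refl _) (Iso.refl _)
      (by dsimp only [Triangle.mk]; apply biprod.hom_ext <;> simp [isoBiprodZero])
      (by dsimp only [Triangle.mk]; aesop_cat)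
      (by dsimp only [Triangle.mk]; apply biprod.hom_ext' <;> simp [isoBiprodZero, ← Functor.map_comp])
  have hTb : Triangle.mk (biprod.lift 0 f'' : X ⟶ Y ⊞ Y'') (biprod.map (𝟙 Y) g'')
      (biprod.desc 0 h'' : Y ⊞ Z'' ⟶ X⟦(1:ℤ)⟧) ∈ distTriang C := by
    refine isomorphic_distinguished _
      (biprodTriangle_distinguished (0 : (0:C) ⟶ Y) (𝟙 Y) (0 : Y ⟶ (0:C)⟦(1:ℤ)⟧) f'' g'' h''
        (contractible_distinguished₁ Y) hT'') _ ?_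
    exact Triangle.isoMk _ _ (isoZeroBiprod (isZero_zero C)) (Iso.refl _) (Iso.refl _)
      (by dsimp only [Triangle.mk]; apply biprod.hom_ext <;> simp [isoZeroBiprod])
      (by dsimp only [Triangle.mk]; aesop_cat)
      (by dsimp only [Triangle.mk]; apply biprod.hom_ext' <;> simp [isoZeroBiprod, ← Functor.map_comp])
  have eA : Triangle.mk (biprod.lift f 0 : X ⟶ Y ⊞ Y'') (biprod.map g (𝟙 Y''))
      (biprod.desc h 0 : Z ⊞ Y'' ⟶ X⟦(1:ℤ)⟧) ≅ Triangle.mk (biprod.lift f f'') a b := by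
    refine isoTriangleOfIso₁₂ _ _ hTa hQ (Iso.refl X)
      (isoOfSqZero (W := Y ⊞ Y'') (-(biprod.fst ≫ t ≫ biprod.inr)) (by simp)) ?_
    dsimp only [Triangle.mk]
    apply biprod.hom_ext <;>
      simp [isoOfSqZero, Preadditive.comp_add, ht]
  have eB : Triangle.mk (biprod.lift 0 f'' : X ⟶ Y ⊞ Y'') (biprod.map (𝟙 Y) g'')
      (biprod.desc 0 h'' : Y ⊞ Z'' ⟶ X⟦(1:ℤ)⟧) ≅ Triangle.mk (biprod.lift f f'') a b := by
    refine isoTriangleOfIso₁₂ _ _ hTb hQ (Iso.refl X)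
      (isoOfSqZero (W := Y ⊞ Y'') (-(biprod.snd ≫ t' ≫ biprod.inl)) (by simp)) ?_
    dsimp only [Triangle.mk]
    apply biprod.hom_ext <;>
      simp [isoOfSqZero, Preadditive.comp_add, ht']
  exact ⟨Triangle.π₃.mapIso eA ≪≫ (Triangle.π₃.mapIso eB).symm ≪≫ biprod.braiding Y Z''⟩

lemma zero_of_rightPerpHom {D M : C} (hz : ∀ w : D⟦(-1:ℤ)⟧ ⟶ M, w = 0)
    (w : D ⟶ M⟦(1:ℤ)⟧) : w = 0 := by
  apply (shiftFunctor C (-1:ℤ)).map_injective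
  rw [Functor.map_zero]
  have h1 := hz ((shiftFunctor C (-1:ℤ)).map w ≫
    (shiftFunctorCompIsoId C (1:ℤ) (-1:ℤ) (by norm_num)).hom.app M)
  have h2 : (shiftFunctor C (-1:ℤ)).map w = ((shiftFunctor C (-1:ℤ)).map w ≫
      (shiftFunctorCompIsoId C (1:ℤ) (-1:ℤ) (by norm_num)).hom.app M) ≫
      (shiftFunctorCompIsoId C (1:ℤ) (-1:ℤ) (by norm_num)).inv.app M := by simp
  rw [h2, h1, Limits.zero_comp]

lemma zero_of_leftPerpHom {M D : C} (hz : ∀ w : M ⟶ D⟦(1:ℤ)⟧, w = 0)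
    (w : M⟦(-1:ℤ)⟧ ⟶ D) : w = 0 := by
  apply (shiftFunctor C (1:ℤ)).map_injective
  rw [Functor.map_zero]
  have h1 := hz ((shiftFunctorCompIsoId C (-1:ℤ) (1:ℤ) (by norm_num)).inv.app M ≫
    (shiftFunctor C (1:ℤ)).map w)
  have h2 : (shiftFunctor C (1:ℤ)).map w =
      (shiftFunctorCompIsoId C (-1:ℤ) (1:ℤ) (by norm_num)).hom.app M ≫
      ((shiftFunctorCompIsoId C (-1:ℤ) (1:ℤ) (by norm_num)).inv.app M ≫
        (shiftFunctor C (1:ℤ)).map w) := by simp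
  rw [h2, h1, Limits.comp_zero]

lemma mem_left_of_biprod_iso {S : Set C} (hS : IsSubcat S) {P Q R : C}
    (e : (P ⊞ Q) ≅ R) (hR : R ∈ S) : P ∈ S :=
  (hS.2.2 (hS.1 e.symm hR)).1

end MutAux

open ZeroObject

/-- Proposition 4.12 for `d = 1`: if `𝒟` is a strongly functorially finite rigid subcategory
with `^⊥(Σ𝒟) = (Σ⁻¹𝒟)^⊥ =: 𝒵` and `𝒵` is extension closed, then forward and backward
`𝒟`-mutation are mutually inverse on subcategories `ℳ` with `𝒟 ⊆ ℳ ⊆ 𝒵`. -/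


theorem mutations_mutually_inverse (𝒟 : Set C) (hsub : IsSubcat 𝒟) (hrig : IsRigid 𝒟)
    (hff : StronglyFunctoriallyFinite 𝒟)
    (hperp : leftPerpShift 𝒟 = rightPerpShift 𝒟)
    (hz : ExtClosed (leftPerpShift 𝒟)) :
    ∀ ℳ : Set C, IsSubcat ℳ → 𝒟 ⊆ ℳ → ℳ ⊆ leftPerpShift 𝒟 →
      backwardMut 𝒟 (forwardMut 𝒟 ℳ) = ℳ ∧ forwardMut 𝒟 (backwardMut 𝒟 ℳ) = ℳ := by
  intro ℳ hsubM hDM hMZ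
  -- `0` belongs to `𝒟`
  have h0D : (0:C) ∈ 𝒟 := by
    obtain ⟨D0, A0, f0, g0, h0, hD0, -, -⟩ := hff.1 (0:C)
    exact (hsub.2.2 (hsub.1 (isoBiprodZero (isZero_zero C)) hD0)).2
  -- perpendicularity facts
  have hZright : ∀ {M : C}, M ∈ ℳ → ∀ {D' : C}, D' ∈ 𝒟 → ∀ w : D' ⟶ M⟦(1:ℤ)⟧, w = 0 := by
    intro M hM D' hD' w
    have hMr : M ∈ rightPerpShift 𝒟 := hperp ▸ hMZ hM
    exact zero_of_rightPerpHom (hMr D' hD') w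
  have hZleft : ∀ {M : C}, M ∈ ℳ → ∀ {D' : C}, D' ∈ 𝒟 → ∀ w : M⟦(-1:ℤ)⟧ ⟶ D', w = 0 := by
    intro M hM D' hD' w
    exact zero_of_leftPerpHom (hMZ hM D' hD') w
  constructor
  · apply Set.eq_of_subset_of_subset
    · rintro B (hB | ⟨D, A, f, g, h, hA, hD, hTr, hf, hg⟩)
      · exact hDM hB
      · -- get a second triangle over `A` with right `𝒟`-approximation `g'`
        rcases hA with hA | ⟨M, D', f', g', h', hM, hD', hTr', hf', hg'⟩
        · -- `A ∈ 𝒟` : use the contractible triangle `0 ⟶ A ⟶ A`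
          obtain ⟨c, hc⟩ := hg.2 hA (𝟙 A)
          obtain ⟨e⟩ := coneA hTr (contractible_distinguished₁ A) c hc g (Category.comp_id g)
          exact mem_left_of_biprod_iso hsubM e
            (hsubM.2.1 (hDM h0D) (hDM hD))
        · obtain ⟨c, hc⟩ := hg.2 hD' g'
          obtain ⟨c', hc'⟩ := hg'.2 hD g
          obtain ⟨e⟩ := coneA hTr hTr' c hc c' hc'
          exact mem_left_of_biprod_iso hsubM e (hsubM.2.1 hM (hDM hD))
    · intro M hM
      obtain ⟨D, A, f, g, h, hD, hTr, hf⟩ := hff.1 M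
      have hg : IsRightApprox 𝒟 g := by
        refine ⟨hD, fun D' hD' u => ?_⟩
        obtain ⟨t, ht⟩ := Triangle.coyoneda_exact₃ _ hTr u (hZright hM hD' (u ≫ h))
        exact ⟨t, ht.symm⟩
      have hA : A ∈ forwardMut 𝒟 ℳ :=
        Or.inr ⟨M, D, f, g, h, hM, hD, hTr, hf, hg⟩
      exact Or.inr ⟨D, A, f, g, h, hA, hD, hTr, hf, hg⟩
  · apply Set.eq_of_subset_of_subset
    · rintro A (hA | ⟨B, D, f, g, h, hB, hD, hTr, hf, hg⟩)
      · exact hDM hA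
      · rcases hB with hB | ⟨D', M, f', g', h', hM, hD', hTr', hf', hg'⟩
        · -- `B ∈ 𝒟` : use the contractible triangle `B ⟶ B ⟶ 0`
          obtain ⟨t, ht⟩ := hf.2 hB (𝟙 B)
          obtain ⟨e⟩ := coneB hTr (contractible_distinguished B) t ht f (Category.id_comp f)
          exact mem_left_of_biprod_iso hsubM e
            (hsubM.2.1 (hDM h0D) (hDM hD))
        · obtain ⟨t, ht⟩ := hf.2 hD' f'
          obtain ⟨t', ht'⟩ := hf'.2 hD f
          obtain ⟨e⟩ := coneB hTr hTr' t ht t' ht'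
          exact mem_left_of_biprod_iso hsubM e (hsubM.2.1 hM (hDM hD))
    · intro M hM
      obtain ⟨B, D, f, g, h, hD, hTr, hg⟩ := hff.2 M
      have hf : IsLeftApprox 𝒟 f := by
        refine ⟨hD, fun D' hD' u => ?_⟩
        obtain ⟨t, ht⟩ := Triangle.yoneda_exact₂ _ (inv_rot_of_distTriang _ hTr) u
          (hZleft hM hD' _)
        exact ⟨t, ht.symm⟩
      have hB : B ∈ backwardMut 𝒟 ℳ :=
        Or.inr ⟨D, M, f, g, h, hM, hD, hTr, hf, hg⟩
      exact Or.inr ⟨B, D, f, g, h, hB, hD, hTr, hf, hg⟩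
end
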